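/- Let f(x) = c₁ + c₂x^{a₂} + c₃x^{a₃} be a polynomial with complex coefficients satisfying c₁c₂c₃ ≠ 0 and 0 < a₂ < a₃. Then every complex root ζ of f satisfies |ζ| > (1/2)·min{ |c₁/c₂|^{1/a₂}, |c₁/c₃|^{1/a₃} }. -/

import Mathlib

theorem trinomial_root_lower_bound (c₁ c₂ c₃ : ℂ) (hc : c₁ * c₂ * c₃ ≠ 0)
    (a₂ a₃ : ℕ) (h₂ : 0 < a₂) (h₂₃ : a₂ < a₃) (ζ : ℂ)
    (hroot : c₁ + c₂ * ζ ^ a₂ + c₃ * ζ ^ a₃ = 0) :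
    ‖ζ‖ > (1 / 2) * min (‖c₁ / c₂‖ ^ ((1 : ℝ) / (a₂ : ℝ)))
      (‖c₁ / c₃‖ ^ ((1 : ℝ) / (a₃ : ℝ))) := by
  have hc1 : c₁ ≠ 0 := fun h => hc (by simp [h])
  have hc2 : c₂ ≠ 0 := fun h => hc (by simp [h])
  have hc3 : c₃ ≠ 0 := fun h => hc (by simp [h])
  by_contra hle
  push_neg at hle
  have habs : ‖c₁‖ ≤ ‖c₂‖ * ‖ζ‖ ^ a₂ +
      ‖c₃‖ * ‖ζ‖ ^ a₃ := by
    have h : c₁ = -(c₂ * ζ ^ a₂ + c₃ * ζ ^ a₃) := by linear_combination hroot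
    rw [h, norm_neg]
    calc ‖c₂ * ζ ^ a₂ + c₃ * ζ ^ a₃‖
        ≤ ‖c₂ * ζ ^ a₂‖ + ‖c₃ * ζ ^ a₃‖ := norm_add_le _ _
      _ = _ := by simp [norm_mul, norm_pow]
  have key : ∀ (c : ℂ) (a : ℕ), c ≠ 0 → 0 < a →
      ‖ζ‖ ≤ (1/2) * (‖c₁/c‖) ^ ((1:ℝ)/(a:ℝ)) →
      ‖c‖ * ‖ζ‖ ^ a ≤ (1/2)^a * ‖c₁‖ := by
    intro c a hcne ha hb
    have hr : ((‖c₁/c‖) ^ ((1:ℝ)/(a:ℝ))) ^ a = ‖c₁/c‖ := by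
      rw [← Real.rpow_natCast ((‖c₁/c‖) ^ ((1:ℝ)/(a:ℝ))) a,
        ← Real.rpow_mul (norm_nonneg _), one_div,
        inv_mul_cancel₀ (by exact_mod_cast ha.ne'), Real.rpow_one]
    have h1 : ‖ζ‖ ^ a ≤ ((1/2) * (‖c₁/c‖) ^ ((1:ℝ)/(a:ℝ))) ^ a :=
      pow_le_pow_left₀ (norm_nonneg _) hb a
    rw [mul_pow, hr] at h1
    calc ‖c‖ * ‖ζ‖ ^ a
        ≤ ‖c‖ * ((1/2)^a * ‖c₁/c‖) :=
          mul_le_mul_of_nonneg_left h1 (norm_nonneg _)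
      _ = (1/2)^a * ‖c₁‖ := by
          have hcp : (0:ℝ) < ‖c‖ := norm_pos_iff.mpr hcne
          rw [norm_div]
          field_simp
  have k2 := key c₂ a₂ hc2 h₂
    (hle.trans (mul_le_mul_of_nonneg_left (min_le_left _ _) (by norm_num)))
  have k3 := key c₃ a₃ hc3 (h₂.trans h₂₃)
    (hle.trans (mul_le_mul_of_nonneg_left (min_le_right _ _) (by norm_num)))
  have p2 : ((1:ℝ)/2)^a₂ ≤ (1/2)^1 :=
    pow_le_pow_of_le_one (by norm_num) (by norm_num) h₂
  have p3 : ((1:ℝ)/2)^a₃ ≤ (1/2)^2 :=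
    pow_le_pow_of_le_one (by norm_num) (by norm_num) (by omega)
  have pos : 0 < ‖c₁‖ := norm_pos_iff.mpr hc1
  nlinarith [habs, k2, k3, p2, p3, pos]
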